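/- Let S : ℝ → [0,1] be non-decreasing, surjective onto an interval, and continuous, and let (pₙ)ₙ ⊂ L²(Ω) converge weakly in L²(Ω) to p̄, while S(pₙ) converges strongly in L²(Ω) (and hence a.e. up to subsequence) to some limit s̄. Then s̄ = S(p̄) almost everywhere (Minty-type identification). -/

import Mathlib

open MeasureTheory Filter
open scoped ENNReal NNReal

section MintyAux

variable {Ω : Type*} [MeasurableSpace Ω] {μ : Measure Ω}

private lemma my_integrable_mul {f g : Ω → ℝ} (hf : MemLp f 2 μ) (hg : MemLp g 2 μ) :
    Integrable (fun x => f x * g x) μ := by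
  have h := L2.integrable_inner (𝕜 := ℝ) (hf.toLp f) (hg.toLp g)
  simp only [RCLike.inner_apply, starRingEnd_apply, star_trivial] at h
  exact h.congr ((hf.coeFn_toLp.mul hg.coeFn_toLp).mono fun x hx => by simpa [mul_comm] using hx)

private lemma my_abs_integral_mul_le {f g : Ω → ℝ} (hf : MemLp f 2 μ) (hg : MemLp g 2 μ) :
    |∫ x, f x * g x ∂μ| ≤ (eLpNorm f 2 μ).toReal * (eLpNorm g 2 μ).toReal := by
  have he : (fun a => inner (𝕜 := ℝ) ((hf.toLp f : Lp ℝ 2 μ) a) ((hg.toLp g : Lp ℝ 2 μ) a))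
      =ᵐ[μ] fun x => f x * g x := by
    filter_upwards [hf.coeFn_toLp, hg.coeFn_toLp] with x h1 h2
    simp only [RCLike.inner_apply, starRingEnd_apply, star_trivial, h1, h2]
    ring
  have h1 : ∫ x, f x * g x ∂μ = inner (𝕜 := ℝ) (hf.toLp f) (hg.toLp g) := by
    rw [L2.inner_def, integral_congr_ae he]
  rw [h1, ← Lp.norm_toLp f hf, ← Lp.norm_toLp g hg]
  exact abs_real_inner_le_norm _ _

private lemma my_mono_mul (S : ℝ → ℝ) (hmono : Monotone S) (a b : ℝ) :
    0 ≤ (S a - S b) * (a - b) := by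
  rcases le_total a b with h | h
  · have := hmono h; nlinarith
  · have := hmono h; nlinarith

private lemma my_pointwise (S : ℝ → ℝ) (hmono : Monotone S) (hcont : Continuous S) {s t : ℝ}
    (h : ∀ q : ℚ, 0 ≤ (s - S q) * (t - q)) : s = S t := by
  have hinv : Tendsto (fun k : ℕ => 1 / ((k : ℝ) + 1)) atTop (nhds 0) :=
    tendsto_one_div_add_atTop_nhds_zero_nat
  have h1 : S t ≤ s := by
    have hex : ∀ k : ℕ, ∃ q : ℚ, t - 1 / ((k : ℝ) + 1) < q ∧ (q : ℝ) < t := fun k =>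
      exists_rat_btwn (by positivity |> fun h0 : (0:ℝ) < 1 / ((k:ℝ)+1) => sub_lt_self t h0)
    choose u hu1 hu2 using hex
    have hui : Tendsto (fun k => (u k : ℝ)) atTop (nhds t) := by
      refine tendsto_of_tendsto_of_tendsto_of_le_of_le (g := fun k : ℕ => t - 1 / ((k:ℝ)+1))
        (h := fun _ => t) ?_ tendsto_const_nhds (fun k => (hu1 k).le) (fun k => (hu2 k).le)
      simpa using tendsto_const_nhds.sub hinv
    have hS : Tendsto (fun k => S (u k : ℝ)) atTop (nhds (S t)) :=
      (hcont.continuousAt.tendsto).comp hui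
    refine le_of_tendsto hS (Eventually.of_forall fun k => ?_)
    have := h (u k)
    nlinarith [hu2 k]
  have h2 : s ≤ S t := by
    have hex : ∀ k : ℕ, ∃ q : ℚ, t < q ∧ (q : ℝ) < t + 1 / ((k : ℝ) + 1) := fun k =>
      exists_rat_btwn (by positivity |> fun h0 : (0:ℝ) < 1 / ((k:ℝ)+1) => lt_add_of_pos_right t h0)
    choose u hu1 hu2 using hex
    have hui : Tendsto (fun k => (u k : ℝ)) atTop (nhds t) := by
      refine tendsto_of_tendsto_of_tendsto_of_le_of_le (g := fun _ : ℕ => t)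
        (h := fun k : ℕ => t + 1 / ((k:ℝ)+1)) tendsto_const_nhds ?_
        (fun k => (hu1 k).le) (fun k => (hu2 k).le)
      simpa using tendsto_const_nhds.add hinv
    have hS : Tendsto (fun k => S (u k : ℝ)) atTop (nhds (S t)) :=
      (hcont.continuousAt.tendsto).comp hui
    refine ge_of_tendsto hS (Eventually.of_forall fun k => ?_)
    have := h (u k)
    nlinarith [hu1 k]
  exact le_antisymm h2 h1

private lemma my_bound (p : ℕ → Ω → ℝ) (pbar : Ω → ℝ)
    (hp : ∀ n, MemLp (p n) 2 μ) (hpbar : MemLp pbar 2 μ)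
    (hweak : ∀ φ : Ω → ℝ, MemLp φ 2 μ →
      Tendsto (fun n => ∫ x, p n x * φ x ∂μ) atTop (nhds (∫ x, pbar x * φ x ∂μ))) :
    ∃ C : ℝ≥0∞, C ≠ ⊤ ∧ ∀ n, eLpNorm (p n) 2 μ ≤ C := by
  haveI : Fact ((1:ℝ≥0∞) ≤ 2) := ⟨one_le_two⟩
  set P : ℕ → Lp ℝ 2 μ := fun n => (hp n).toLp (p n) with hP
  have key : ∀ n (φ : Lp ℝ 2 μ), (innerSL ℝ (P n)) φ = ∫ x, p n x * φ x ∂μ := by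
    intro n φ
    have he : (fun a => inner (𝕜 := ℝ) ((P n) a) (φ a)) =ᵐ[μ] fun x => p n x * (φ : Ω → ℝ) x := by
      filter_upwards [(hp n).coeFn_toLp] with x h1
      simp only [RCLike.inner_apply, starRingEnd_apply, star_trivial, h1]
      rw [mul_comm]; exact congrArg (· * (φ : Ω → ℝ) x) h1
    simp only [innerSL_apply_apply]
    rw [L2.inner_def, integral_congr_ae he]
  have hbdd : ∀ φ : Lp ℝ 2 μ, ∃ C, ∀ n, ‖(innerSL ℝ (P n)) φ‖ ≤ C := by
    intro φ
    have ht := (hweak φ (Lp.memLp φ)).norm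
    obtain ⟨C, hC⟩ := ht.bddAbove_range
    refine ⟨C, fun n => ?_⟩
    rw [key n φ]
    exact hC ⟨n, rfl⟩
  obtain ⟨C', hC'⟩ := banach_steinhaus hbdd
  refine ⟨ENNReal.ofReal C', ENNReal.ofReal_ne_top, fun n => ?_⟩
  have h1 : ‖P n‖ ≤ C' := by rw [← innerSL_apply_norm ℝ (P n)]; exact hC' n
  rw [Lp.norm_toLp] at h1
  exact ENNReal.le_ofReal_iff_toReal_le (hp n).2.ne (by
    exact le_trans ENNReal.toReal_nonneg h1) |>.mpr h1

private lemma my_sf_iUnion (μ : Measure Ω) (t : ℕ → Set Ω) (hm : ∀ n, MeasurableSet (t n))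
    (h : ∀ n, SigmaFinite (μ.restrict (t n))) :
    SigmaFinite (μ.restrict (⋃ n, t n)) := by
  have hTm : MeasurableSet (⋃ n, t n) := MeasurableSet.iUnion hm
  refine ⟨⟨⟨fun m => (t m.unpair.1 ∩ spanningSets (μ.restrict (t m.unpair.1)) m.unpair.2)
      ∪ (⋃ n, t n)ᶜ, fun _ => trivial, fun m => ?_, ?_⟩⟩⟩
  · set n := m.unpair.1
    set k := m.unpair.2
    set Sp := spanningSets (μ.restrict (t n)) k with hSp
    refine (measure_union_le _ _).trans_lt ?_
    have h1 : μ.restrict (⋃ n, t n) (⋃ n, t n)ᶜ = 0 := by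
      rw [Measure.restrict_apply hTm.compl, Set.compl_inter_self, measure_empty]
    have h2a : μ.restrict (⋃ n, t n) (t n ∩ Sp) ≤ μ (t n ∩ Sp) := by
      rw [Measure.restrict_apply ((hm _).inter (measurableSet_spanningSets _ _))]
      exact measure_mono Set.inter_subset_left
    have h2b : μ (t n ∩ Sp) = μ.restrict (t n) Sp := by
      rw [Measure.restrict_apply (measurableSet_spanningSets _ _), Set.inter_comm]
    have h3 : μ.restrict (t n) Sp < ⊤ := measure_spanningSets_lt_top _ _
    rw [h1, add_zero]
    exact (h2a.trans_eq h2b).trans_lt h3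
  · rw [Set.eq_univ_iff_forall]
    intro x
    by_cases hx : x ∈ ⋃ n, t n
    · obtain ⟨n, hn⟩ := Set.mem_iUnion.1 hx
      have hx2 : x ∈ ⋃ k, spanningSets (μ.restrict (t n)) k := by
        rw [iUnion_spanningSets]; trivial
      obtain ⟨k, hk⟩ := Set.mem_iUnion.1 hx2
      refine Set.mem_iUnion.2 ⟨Nat.pair n k, Set.mem_union_left _ ?_⟩
      rw [Nat.unpair_pair]
      exact ⟨hn, hk⟩
    · exact Set.mem_iUnion.2 ⟨0, Set.mem_union_right _ hx⟩

private lemma my_keyIneq (S : ℝ → ℝ) (hmono : Monotone S) (hcont : Continuous S)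
    (p : ℕ → Ω → ℝ) (pbar : Ω → ℝ)
    (hp : ∀ n, MemLp (p n) 2 μ) (hpbar : MemLp pbar 2 μ)
    (hweak : ∀ φ : Ω → ℝ, MemLp φ 2 μ →
      Tendsto (fun n => ∫ x, p n x * φ x ∂μ) atTop (nhds (∫ x, pbar x * φ x ∂μ)))
    (sbar : Ω → ℝ) (hsbar : MemLp sbar 2 μ)
    (hstrong : Tendsto (fun n => eLpNorm (fun x => S (p n x) - sbar x) 2 μ) atTop (nhds 0))
    {C : ℝ≥0∞} (hC : C ≠ ⊤) (hCb : ∀ n, eLpNorm (p n) 2 μ ≤ C)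
    {A : Set Ω} (hA : MeasurableSet A) (hAfin : μ A < ⊤) (q : ℝ) :
    0 ≤ ∫ x in A, (sbar x - S q) * (pbar x - q) ∂μ := by
  haveI : IsFiniteMeasure (μ.restrict A) := ⟨by rwa [Measure.restrict_apply_univ]⟩
  set φ : Ω → ℝ := A.indicator (fun x => sbar x - S q) with hφdef
  have hφeq : φ = fun x => A.indicator sbar x - A.indicator (fun _ => S q) x := by
    funext x; by_cases hx : x ∈ A <;> simp [hφdef, hx]
  have hφmem : MemLp φ 2 μ := by
    rw [hφeq]
    exact (hsbar.indicator hA).sub (memLp_indicator_const 2 hA _ (Or.inr hAfin.ne))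
  have hφint : Integrable φ μ := by
    have h1 : IntegrableOn (fun x => sbar x - S q) A μ :=
      ((hsbar.restrict A).integrable one_le_two).sub (integrable_const _)
    exact h1.integrable_indicator hA
  set f : ℕ → Ω → ℝ := fun n x => S (p n x) - sbar x with hfdef
  have hfmeas : ∀ n, AEStronglyMeasurable (f n) μ := fun n =>
    (hcont.comp_aestronglyMeasurable (hp n).1).sub hsbar.1
  have hfmem : ∀ᶠ n in atTop, MemLp (f n) 2 μ := by
    filter_upwards [hstrong.eventually_lt_const (by norm_num : (0:ℝ≥0∞) < 1)] with n hn
    exact ⟨hfmeas n, hn.trans (by norm_num)⟩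
  set ψ : ℕ → Ω → ℝ := fun n => A.indicator (fun x => p n x - q) with hψdef
  have hψeq : ∀ n, ψ n = fun x => A.indicator (p n) x - A.indicator (fun _ => q) x := by
    intro n; funext x; by_cases hx : x ∈ A <;> simp [hψdef, hx]
  have hψmem : ∀ n, MemLp (ψ n) 2 μ := by
    intro n; rw [hψeq n]
    exact ((hp n).indicator hA).sub (memLp_indicator_const 2 hA _ (Or.inr hAfin.ne))
  set D : ℝ≥0∞ := C + (‖q‖₊ : ℝ≥0∞) * μ A ^ (1 / (2 : ℝ≥0∞).toReal) with hDdef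
  have hD : D ≠ ⊤ := by
    refine ENNReal.add_ne_top.2 ⟨hC, ENNReal.mul_ne_top ENNReal.coe_ne_top
      (ENNReal.rpow_ne_top_of_nonneg (by norm_num) hAfin.ne)⟩
  have hψle : ∀ n, eLpNorm (ψ n) 2 μ ≤ D := by
    intro n
    rw [hψeq n]
    calc eLpNorm (fun x => A.indicator (p n) x - A.indicator (fun _ => q) x) 2 μ
        ≤ eLpNorm (A.indicator (p n)) 2 μ + eLpNorm (A.indicator (fun _ => q)) 2 μ :=
          eLpNorm_sub_le ((hp n).indicator hA).1
            (memLp_indicator_const 2 hA _ (Or.inr hAfin.ne)).1 one_le_two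
      _ ≤ D := by
          rw [hDdef, eLpNorm_indicator_const hA two_ne_zero ENNReal.ofNat_ne_top]
          exact add_le_add ((eLpNorm_indicator_le _).trans (hCb n)) le_rfl
  have hT1 : Tendsto (fun n => ∫ x, f n x * ψ n x ∂μ) atTop (nhds 0) := by
    rw [tendsto_zero_iff_norm_tendsto_zero]
    refine squeeze_zero' (g := fun n => (eLpNorm (f n) 2 μ).toReal * D.toReal)
      (Eventually.of_forall fun n => norm_nonneg _) ?_ ?_
    · filter_upwards [hfmem] with n hn
      calc ‖∫ x, f n x * ψ n x ∂μ‖ = |∫ x, f n x * ψ n x ∂μ| := Real.norm_eq_abs _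
        _ ≤ (eLpNorm (f n) 2 μ).toReal * (eLpNorm (ψ n) 2 μ).toReal :=
            my_abs_integral_mul_le hn (hψmem n)
        _ ≤ (eLpNorm (f n) 2 μ).toReal * D.toReal :=
            mul_le_mul_of_nonneg_left (ENNReal.toReal_mono hD (hψle n)) ENNReal.toReal_nonneg
    · have h0 := (ENNReal.tendsto_toReal (by simp : (0:ℝ≥0∞) ≠ ⊤)).comp hstrong
      simpa using h0.mul_const D.toReal
  set J : ℕ → ℝ := fun n => ∫ x, A.indicator (fun y => (S (p n y) - S q) * (p n y - q)) x ∂μ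
    with hJdef
  have hJnonneg : ∀ n, 0 ≤ J n := by
    intro n
    refine integral_nonneg fun x => Set.indicator_nonneg (fun y _ => ?_) x
    exact my_mono_mul S hmono (p n y) q
  have hJeq : ∀ᶠ n in atTop, J n =
      (∫ x, f n x * ψ n x ∂μ) + (∫ x, p n x * φ x ∂μ) - q * ∫ x, φ x ∂μ := by
    filter_upwards [hfmem] with n hn
    have hint1 : Integrable (fun x => f n x * ψ n x) μ := my_integrable_mul hn (hψmem n)
    have hint2 : Integrable (fun x => p n x * φ x) μ := my_integrable_mul (hp n) hφmem
    have hint3 : Integrable (fun x => q * φ x) μ := hφint.const_mul q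
    have hpt : (fun x => A.indicator (fun y => (S (p n y) - S q) * (p n y - q)) x)
        = fun x => f n x * ψ n x + p n x * φ x - q * φ x := by
      funext x
      by_cases hx : x ∈ A <;> simp [hφdef, hψdef, hfdef, hx] <;> ring
    have hint12 : Integrable (fun x => f n x * ψ n x + p n x * φ x) μ := hint1.add hint2
    rw [hJdef]
    simp only [hpt]
    rw [integral_sub hint12 hint3, integral_add hint1 hint2, integral_const_mul]
  have hlim : Tendsto J atTop
      (nhds (0 + (∫ x, pbar x * φ x ∂μ) - q * ∫ x, φ x ∂μ)) := by
    refine Tendsto.congr' (hJeq.mono fun n h => h.symm) ?_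
    exact (hT1.add (hweak φ hφmem)).sub tendsto_const_nhds
  have h0le : 0 ≤ 0 + (∫ x, pbar x * φ x ∂μ) - q * ∫ x, φ x ∂μ :=
    ge_of_tendsto' hlim hJnonneg
  have hpt2 : (fun x => A.indicator (fun y => (sbar y - S q) * (pbar y - q)) x)
      = fun x => pbar x * φ x - q * φ x := by
    funext x
    by_cases hx : x ∈ A <;> simp [hφdef, hx] <;> ring
  rw [← integral_indicator hA]
  calc (0:ℝ) ≤ (∫ x, pbar x * φ x ∂μ) - q * ∫ x, φ x ∂μ := by linarith
    _ = ∫ x, (pbar x * φ x - q * φ x) ∂μ := by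
        rw [integral_sub (my_integrable_mul hpbar hφmem) (hφint.const_mul q),
          integral_const_mul]
    _ = ∫ x, A.indicator (fun y => (sbar y - S q) * (pbar y - q)) x ∂μ := by
        rw [hpt2]

private lemma my_keysub (S : ℝ → ℝ) (hmono : Monotone S) (hcont : Continuous S)
    (p : ℕ → Ω → ℝ) (pbar : Ω → ℝ)
    (hp : ∀ n, MemLp (p n) 2 μ) (hpbar : MemLp pbar 2 μ)
    (hweak : ∀ φ : Ω → ℝ, MemLp φ 2 μ →
      Tendsto (fun n => ∫ x, p n x * φ x ∂μ) atTop (nhds (∫ x, pbar x * φ x ∂μ)))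
    (sbar : Ω → ℝ) (hsbar : MemLp sbar 2 μ)
    (hstrong : Tendsto (fun n => eLpNorm (fun x => S (p n x) - sbar x) 2 μ) atTop (nhds 0))
    {C : ℝ≥0∞} (hC : C ≠ ⊤) (hCb : ∀ n, eLpNorm (p n) 2 μ ≤ C)
    (U : Set Ω) (hU : MeasurableSet U) [SigmaFinite (μ.restrict U)] :
    ∀ᵐ x ∂μ.restrict U, sbar x = S (pbar x) := by
  have hq : ∀ q : ℚ, ∀ᵐ x ∂μ.restrict U, 0 ≤ (sbar x - S q) * (pbar x - (q:ℝ)) := by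
    intro q
    have := ae_nonneg_of_forall_setIntegral_nonneg_of_sigmaFinite
      (μ := μ.restrict U) (f := fun x => (sbar x - S q) * (pbar x - (q:ℝ)))
      (fun s hs hμs => ?_) (fun s hs hμs => ?_)
    · exact this
    · rw [IntegrableOn, Measure.restrict_restrict hs]
      rw [Measure.restrict_apply hs] at hμs
      haveI : IsFiniteMeasure (μ.restrict (s ∩ U)) := ⟨by rwa [Measure.restrict_apply_univ]⟩
      exact my_integrable_mul
        (((hsbar.restrict (s ∩ U))).sub (memLp_const _))
        (((hpbar.restrict (s ∩ U))).sub (memLp_const _))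
    · rw [Measure.restrict_restrict hs]
      rw [Measure.restrict_apply hs] at hμs
      exact my_keyIneq S hmono hcont p pbar hp hpbar hweak sbar hsbar hstrong hC hCb
        (hs.inter hU) hμs (q : ℝ)
  have hallq : ∀ᵐ x ∂μ.restrict U, ∀ q : ℚ, 0 ≤ (sbar x - S q) * (pbar x - (q:ℝ)) :=
    ae_all_iff.2 hq
  filter_upwards [hallq] with x hx using my_pointwise S hmono hcont hx

end MintyAux

/-- Minty-type identification: if `pₙ ⇀ p̄` weakly in `L²` and `S(pₙ) → s̄`
strongly in `L²` with `S` non-decreasing continuous with interval range in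
`[0,1]`, then `s̄ = S(p̄)` a.e. -/
theorem stmt15 {Ω : Type*} [MeasurableSpace Ω] (μ : Measure Ω)
    (S : ℝ → ℝ) (hmono : Monotone S) (hcont : Continuous S)
    (hrange : ∀ p, S p ∈ Set.Icc (0:ℝ) 1) (hconn : (Set.range S).OrdConnected)
    (p : ℕ → Ω → ℝ) (pbar : Ω → ℝ)
    (hp : ∀ n, MemLp (p n) 2 μ) (hpbar : MemLp pbar 2 μ)
    (hweak : ∀ φ : Ω → ℝ, MemLp φ 2 μ →
      Tendsto (fun n => ∫ x, p n x * φ x ∂μ) atTop (nhds (∫ x, pbar x * φ x ∂μ)))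
    (sbar : Ω → ℝ) (hsbar : MemLp sbar 2 μ)
    (hstrong :
      Tendsto (fun n => eLpNorm (fun x => S (p n x) - sbar x) 2 μ) atTop (nhds 0)) :
    sbar =ᵐ[μ] fun x => S (pbar x) := by
  obtain ⟨C, hC, hCb⟩ := my_bound p pbar hp hpbar hweak
  have hfinb : AEFinStronglyMeasurable pbar μ :=
    hpbar.aefinStronglyMeasurable two_ne_zero ENNReal.ofNat_ne_top
  have hfins : AEFinStronglyMeasurable sbar μ :=
    hsbar.aefinStronglyMeasurable two_ne_zero ENNReal.ofNat_ne_top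
  have hfinp : ∀ n, AEFinStronglyMeasurable (p n) μ := fun n =>
    (hp n).aefinStronglyMeasurable two_ne_zero ENNReal.ofNat_ne_top
  set T : Set Ω := (hfinb.sigmaFiniteSet ∪ hfins.sigmaFiniteSet)
      ∪ ⋃ n, (hfinp n).sigmaFiniteSet with hTdef
  have hTm : MeasurableSet T :=
    (hfinb.measurableSet.union hfins.measurableSet).union
      (MeasurableSet.iUnion fun n => (hfinp n).measurableSet)
  haveI hsf1 : SigmaFinite (μ.restrict (⋃ n, (hfinp n).sigmaFiniteSet)) :=
    my_sf_iUnion μ _ (fun n => (hfinp n).measurableSet)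
      (fun n => (hfinp n).sigmaFinite_restrict)
  haveI hsfT : SigmaFinite (μ.restrict T) := by
    rw [hTdef]; infer_instance
  refine ae_of_ae_restrict_of_ae_restrict_compl T ?_ ?_
  · exact my_keysub S hmono hcont p pbar hp hpbar hweak sbar hsbar hstrong hC hCb T hTm
  · have hpbar0 : pbar =ᵐ[μ.restrict Tᶜ] 0 :=
      ae_restrict_of_ae_restrict_of_subset
        (Set.compl_subset_compl.2 ((Set.subset_union_left).trans Set.subset_union_left))
        hfinb.ae_eq_zero_compl
    have hsbar0 : sbar =ᵐ[μ.restrict Tᶜ] 0 :=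
      ae_restrict_of_ae_restrict_of_subset
        (Set.compl_subset_compl.2 ((Set.subset_union_right).trans Set.subset_union_left))
        hfins.ae_eq_zero_compl
    have hpn0 : ∀ n, p n =ᵐ[μ.restrict Tᶜ] 0 := fun n =>
      ae_restrict_of_ae_restrict_of_subset
        (Set.compl_subset_compl.2
          ((Set.subset_iUnion (fun n => (hfinp n).sigmaFiniteSet) n).trans
            Set.subset_union_right))
        (hfinp n).ae_eq_zero_compl
    rcases eq_or_ne (μ Tᶜ) ⊤ with htop | hfin
    · have hS0 : S 0 = 0 := by
        by_contra hne
        obtain ⟨n, hn⟩ := (hstrong.eventually_lt_const (by norm_num : (0:ℝ≥0∞) < 1)).exists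
        have hconst : (fun x => S (p n x) - sbar x) =ᵐ[μ.restrict Tᶜ] (fun _ => S 0) := by
          filter_upwards [hpn0 n, hsbar0] with x h1 h2
          simp only [Pi.zero_apply] at h1 h2
          rw [h1, h2, sub_zero]
        have hle : eLpNorm (fun x => S (p n x) - sbar x) 2 (μ.restrict Tᶜ)
            ≤ eLpNorm (fun x => S (p n x) - sbar x) 2 μ :=
          eLpNorm_mono_measure _ Measure.restrict_le_self
        have hμc : μ.restrict Tᶜ Set.univ = ⊤ := by
          rw [Measure.restrict_apply_univ]; exact htop
        have hne0 : μ.restrict Tᶜ ≠ 0 := by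
          intro h0
          rw [h0] at hμc
          simp at hμc
        rw [eLpNorm_congr_ae hconst, eLpNorm_const _ two_ne_zero hne0, hμc,
          ENNReal.top_rpow_of_pos (by norm_num), ENNReal.mul_top
            (by simpa using hne)] at hle
        exact absurd (hle.trans_lt hn) (by simp)
      filter_upwards [hpbar0, hsbar0] with x h1 h2
      simp only [Pi.zero_apply] at h1 h2
      rw [h1, h2, hS0]
    · haveI : IsFiniteMeasure (μ.restrict Tᶜ) :=
        ⟨by rw [Measure.restrict_apply_univ]; exact lt_top_iff_ne_top.2 hfin⟩
      exact my_keysub S hmono hcont p pbar hp hpbar hweak sbar hsbar hstrong hC hCb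
        Tᶜ hTm.compl
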